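/- The multiplicative monoid generated by the Möbius transformations P: x ↦ 1 + 1/x and M: x ↦ 1/(1+x) is free: no nontrivial relation holds between words in P and M. -/
import Mathlib


/-- The matrix of the Möbius transformation `P : x ↦ 1 + 1/x`. -/
def Pm : Matrix (Fin 2) (Fin 2) ℤ := !![1, 1; 1, 0]

/-- The matrix of the Möbius transformation `M : x ↦ 1/(1+x)`. -/
def Mm : Matrix (Fin 2) (Fin 2) ℤ := !![0, 1; 1, 1]

/-- A letter of a word in the monoid generated by `P` and `M`. -/
def toMat (b : Bool) : Matrix (Fin 2) (Fin 2) ℤ := if b then Pm else Mm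

/-- The product of a word in `P` and `M`. -/
def wordProd (w : List Bool) : Matrix (Fin 2) (Fin 2) ℤ := (w.map toMat).prod

lemma wordProd_nil : wordProd [] = 1 := rfl

lemma wordProd_cons (b : Bool) (w : List Bool) :
    wordProd (b :: w) = toMat b * wordProd w := by
  simp [wordProd]

lemma mulP (N : Matrix (Fin 2) (Fin 2) ℤ) :
    Pm * N = !![N 0 0 + N 1 0, N 0 1 + N 1 1; N 0 0, N 0 1] := by
  ext i j
  fin_cases i <;> fin_cases j <;>
    simp [Pm, Matrix.mul_apply, Fin.sum_univ_two]

lemma mulM (N : Matrix (Fin 2) (Fin 2) ℤ) :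
    Mm * N = !![N 1 0, N 1 1; N 0 0 + N 1 0, N 0 1 + N 1 1] := by
  ext i j
  fin_cases i <;> fin_cases j <;>
    simp [Mm, Matrix.mul_apply, Fin.sum_univ_two]

def Good (N : Matrix (Fin 2) (Fin 2) ℤ) : Prop :=
  0 ≤ N 0 0 ∧ 0 ≤ N 0 1 ∧ 0 ≤ N 1 0 ∧ 0 ≤ N 1 1 ∧
    1 ≤ N 0 0 + N 0 1 ∧ 1 ≤ N 1 0 + N 1 1

lemma good_wordProd (w : List Bool) : Good (wordProd w) := by
  induction w with
  | nil => simp [wordProd_nil, Good, Matrix.one_apply]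
  | cons b w ih =>
    rw [wordProd_cons]
    obtain ⟨h1, h2, h3, h4, h5, h6⟩ := ih
    cases b <;> simp [toMat, mulP, mulM, Good] <;> omega

lemma eq_of_entries {A B : Matrix (Fin 2) (Fin 2) ℤ}
    (h00 : A 0 0 = B 0 0) (h01 : A 0 1 = B 0 1)
    (h10 : A 1 0 = B 1 0) (h11 : A 1 1 = B 1 1) : A = B := by
  ext i j
  fin_cases i <;> fin_cases j <;> assumption

theorem monoid_PM_free : Function.Injective wordProd := by
  intro w1 w2 h
  induction w1 generalizing w2 with
  | nil =>
    cases w2 with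
    | nil => rfl
    | cons b w =>
      exfalso
      obtain ⟨h1, h2, h3, h4, h5, h6⟩ := good_wordProd w
      rw [wordProd_nil, wordProd_cons] at h
      have e00 := congrFun (congrFun h 0) 0
      have e01 := congrFun (congrFun h 0) 1
      have e10 := congrFun (congrFun h 1) 0
      have e11 := congrFun (congrFun h 1) 1
      cases b <;>
        simp [toMat, mulP, mulM, Matrix.one_apply] at e00 e01 e10 e11 <;>
        omega
  | cons b1 w1 ih =>
    cases w2 with
    | nil =>
      exfalso
      obtain ⟨h1, h2, h3, h4, h5, h6⟩ := good_wordProd w1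
      rw [wordProd_nil, wordProd_cons] at h
      have e00 := congrFun (congrFun h 0) 0
      have e01 := congrFun (congrFun h 0) 1
      have e10 := congrFun (congrFun h 1) 0
      have e11 := congrFun (congrFun h 1) 1
      cases b1 <;>
        simp [toMat, mulP, mulM, Matrix.one_apply] at e00 e01 e10 e11 <;>
        omega
    | cons b2 w2 =>
      obtain ⟨a1, a2, a3, a4, a5, a6⟩ := good_wordProd w1
      obtain ⟨c1, c2, c3, c4, c5, c6⟩ := good_wordProd w2
      rw [wordProd_cons, wordProd_cons] at h
      have e00 := congrFun (congrFun h 0) 0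
      have e01 := congrFun (congrFun h 0) 1
      have e10 := congrFun (congrFun h 1) 0
      have e11 := congrFun (congrFun h 1) 1
      have hb : b1 = b2 := by
        cases b1 <;> cases b2 <;>
          simp [toMat, mulP, mulM] at e00 e01 e10 e11 ⊢ <;>
          omega
      subst hb
      have hw : w1 = w2 := by
        apply ih
        cases b1 <;>
          simp [toMat, mulP, mulM] at e00 e01 e10 e11 <;>
          exact eq_of_entries (by omega) (by omega) (by omega) (by omega)
      rw [hw]
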